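/- Let A and B be nonempty closed subsets of a metric space (X,d) and let T : A∪B → A∪B be a cyclic contraction. Suppose A is boundedly compact and A is a Chebyshev set for proximinal points with respect to B. Then T has a unique best proximity point z in A, and the sequence {T^{2n}x} converges to z for every x ∈ A. -/

import Mathlib

open Filter Metric

/-- The distance between two sets: `inf {d(x,y) : x ∈ A, y ∈ B}`. -/
noncomputable def setDist {X : Type*} [PseudoMetricSpace X] (A B : Set X) : ℝ :=
  sInf (Set.image2 dist A B)

/-- `T` is a cyclic contraction on `A ∪ B`. -/
def CyclicContraction {X : Type*} [MetricSpace X] (A B : Set X) (T : X → X) : Prop :=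
  Set.MapsTo T A B ∧ Set.MapsTo T B A ∧ ∃ k : ℝ, 0 < k ∧ k < 1 ∧
    ∀ x ∈ A, ∀ y ∈ B, dist (T x) (T y) ≤ k * dist x y + (1 - k) * setDist A B

/-- `A` is boundedly compact: every closed bounded subset of `A` is compact. -/
def BoundedlyCompact {X : Type*} [MetricSpace X] (A : Set X) : Prop :=
  ∀ S ⊆ A, IsClosed S → Bornology.IsBounded S → IsCompact S

/-- `A` is a Chebyshev set for proximinal points with respect to `B`:
for any `x ∈ B` with `dist(x,A) = dist(A,B)`, the metric projection `P_A(x)`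
is a singleton. -/
def ChebyshevForProximinal {X : Type*} [MetricSpace X] (A B : Set X) : Prop :=
  ∀ x ∈ B, Metric.infDist x A = setDist A B →
    ∃! y, y ∈ A ∧ dist x y = Metric.infDist x A

theorem best_proximity_of_boundedly_compact {X : Type*} [MetricSpace X]
    (A B : Set X) (hA : A.Nonempty) (hB : B.Nonempty)
    (hAclosed : IsClosed A) (hBclosed : IsClosed B)
    (T : X → X) (hT : CyclicContraction A B T)
    (hcomp : BoundedlyCompact A) (hcheb : ChebyshevForProximinal A B) :
    ∃ z ∈ A, dist z (T z) = setDist A B ∧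
      (∀ z' ∈ A, dist z' (T z') = setDist A B → z' = z) ∧
      ∀ x ∈ A, Tendsto (fun n => T^[2 * n] x) atTop (nhds z) := by
  obtain ⟨hTA, hTB, k, hk0, hk1, hcontr⟩ := hT
  set D := setDist A B with hD
  -- basic: D ≤ dist a b for a ∈ A, b ∈ B
  have hDle : ∀ a ∈ A, ∀ b ∈ B, D ≤ dist a b := by
    intro a ha b hb
    exact csInf_le ⟨0, fun r hr => by
      obtain ⟨x, hx, y, hy, rfl⟩ := hr; exact dist_nonneg⟩ ⟨a, ha, b, hb, rfl⟩
  -- membership of iterates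
  have hmem : ∀ x ∈ A, ∀ n, T^[2*n] x ∈ A ∧ T^[2*n+1] x ∈ B := by
    intro x hx n
    induction n with
    | zero => simpa using ⟨hx, hTA hx⟩
    | succ n ih =>
      have h1 : T^[2*(n+1)] x = T (T^[2*n+1] x) := by
        rw [show 2*(n+1) = (2*n+1)+1 by ring, Function.iterate_succ_apply']
      have h2 : T^[2*(n+1)+1] x = T (T^[2*(n+1)] x) :=
        Function.iterate_succ_apply' T _ x
      refine ⟨h1 ▸ hTB ih.2, ?_⟩
      rw [h2, h1]; exact hTA (hTB ih.2)
  -- lower bound on consecutive distances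
  have hDlow : ∀ x ∈ A, ∀ n, D ≤ dist (T^[n] x) (T^[n+1] x) := by
    intro x hx n
    rcases Nat.even_or_odd n with ⟨m, hm⟩ | ⟨m, hm⟩
    · have h1 := (hmem x hx m).1
      have h2 := (hmem x hx m).2
      rw [hm, show m+m = 2*m by ring]
      exact hDle _ h1 _ h2
    · have h1 := (hmem x hx m).2
      have h2 := (hmem x hx (m+1)).1
      rw [hm, dist_comm, show 2*m+1+1 = 2*(m+1) by ring]
      exact hDle _ h2 _ h1
  -- contraction step on consecutive distances
  have hstep : ∀ x ∈ A, ∀ n,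
      dist (T^[n+1] x) (T^[n+2] x) ≤ k * dist (T^[n] x) (T^[n+1] x) + (1-k) * D := by
    intro x hx n
    rcases Nat.even_or_odd n with ⟨m, hm⟩ | ⟨m, hm⟩
    · have h1 := (hmem x hx m).1
      have h2 := (hmem x hx m).2
      rw [hm, show m+m = 2*m by ring]
      have hc := hcontr _ h1 _ h2
      have e1 : T^[2*m+1] x = T (T^[2*m] x) := Function.iterate_succ_apply' T _ x
      have e2 : T^[2*m+2] x = T (T^[2*m+1] x) := by
        rw [show 2*m+2 = (2*m+1)+1 by ring]; exact Function.iterate_succ_apply' T _ x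
      rw [← e2, ← e1] at hc
      exact hc
    · have h1 := (hmem x hx m).2
      rw [hm]
      have hA1 : T^[2*m+1+1] x ∈ A := by
        have := (hmem x hx (m+1)).1
        rwa [show 2*(m+1) = 2*m+1+1 by ring] at this
      have hc := hcontr _ hA1 _ h1
      have e2 : T^[2*m+1+1] x = T (T^[2*m+1] x) := Function.iterate_succ_apply' T _ x
      rw [← e2] at hc
      have e1 : T^[2*m+1+2] x = T (T^[2*m+1+1] x) := by
        rw [show 2*m+1+2 = (2*m+1+1)+1 by ring]; exact Function.iterate_succ_apply' T _ x
      rw [e1, dist_comm (T^[2*m+1+1] x), dist_comm (T^[2*m+1] x)]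
      exact hc
  -- geometric bound
  have hgeo : ∀ x ∈ A, ∀ n,
      dist (T^[n] x) (T^[n+1] x) ≤ k^n * (dist x (T x) - D) + D := by
    intro x hx n
    induction n with
    | zero => simp
    | succ n ih =>
      have := hstep x hx n
      have hk0' : (0:ℝ) ≤ k := le_of_lt hk0
      calc dist (T^[n+1] x) (T^[n+2] x) ≤ k * dist (T^[n] x) (T^[n+1] x) + (1-k)*D := this
        _ ≤ k * (k^n * (dist x (T x) - D) + D) + (1-k)*D := by nlinarith [ih]
        _ = k^(n+1) * (dist x (T x) - D) + D := by ring
  -- consecutive distances tend to D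
  have hconsec : ∀ x ∈ A, Tendsto (fun n => dist (T^[n] x) (T^[n+1] x)) atTop (nhds D) := by
    intro x hx
    have hgl : Tendsto (fun n : ℕ => k^n * (dist x (T x) - D) + D) atTop (nhds D) := by
      have := (tendsto_pow_atTop_nhds_zero_of_lt_one (le_of_lt hk0) hk1).mul_const
        (dist x (T x) - D)
      simpa using this.add_const D
    exact tendsto_of_tendsto_of_tendsto_of_le_of_le tendsto_const_nhds hgl
      (fun n => hDlow x hx n) (fun n => hgeo x hx n)
  -- D ≤ dist x (T x) for x ∈ A
  have hd0 : ∀ x ∈ A, D ≤ dist x (T x) := fun x hx => by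
    simpa using hDlow x hx 0
  -- boundedness of even orbit
  have hbdd : ∀ x ∈ A, ∀ n, dist (T^[2*n] x) (T x) ≤
      max (dist x (T x)) (2*k*dist x (T x)/(1-k) + D) := by
    intro x hx n
    rcases n with _ | n
    · simpa using le_max_left _ _
    · refine le_trans ?_ (le_max_right _ _)
      have hodd : T^[2*n+1] x ∈ B := (hmem x hx n).2
      have h1 : dist (T x) (T^[2*(n+1)] x) ≤ k * dist x (T^[2*n+1] x) + (1-k)*D := by
        have hc := hcontr x hx _ hodd
        have e : T^[2*(n+1)] x = T (T^[2*n+1] x) := by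
          rw [show 2*(n+1) = (2*n+1)+1 by ring]; exact Function.iterate_succ_apply' T _ x
        rwa [← e] at hc
      have h2 : dist x (T^[2*n+1] x) ≤
          dist x (T x) + dist (T x) (T^[2*(n+1)] x) + dist (T^[2*(n+1)] x) (T^[2*n+1] x) :=
        dist_triangle4 _ _ _ _
      have h3 : dist (T^[2*(n+1)] x) (T^[2*n+1] x) ≤ dist x (T x) := by
        have := hgeo x hx (2*n+1)
        have hkpow : k^(2*n+1) ≤ 1 := pow_le_one₀ (le_of_lt hk0) (le_of_lt hk1)
        have hge := hd0 x hx
        rw [dist_comm, show 2*n+1+1 = 2*(n+1) by ring] at this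
        nlinarith
      have hk1' : (0:ℝ) < 1 - k := by linarith
      rw [dist_comm]
      have := hd0 x hx
      rw [div_add' _ _ _ (ne_of_gt hk1'), le_div_iff₀ hk1']
      nlinarith
  -- any subsequential limit of the even orbit is a best proximity point
  have hlimbp : ∀ x ∈ A, ∀ z, ∀ φ : ℕ → ℕ, StrictMono φ →
      Tendsto (fun j => T^[2 * φ j] x) atTop (nhds z) → z ∈ A → dist z (T z) = D := by
    intro x hx z φ hφ hconv hz
    refine le_antisymm ?_ (hDle z hz _ (hTA hz))
    have heps : Tendsto (fun j => dist (T^[2 * φ j] x) z) atTop (nhds 0) := by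
      have := hconv.dist (tendsto_const_nhds (x := z))
      simpa using this
    have hidx : Tendsto (fun j => 2 * φ j - 1) atTop atTop := by
      rw [tendsto_atTop_atTop]
      intro b
      exact ⟨b + 1, fun j hj => by have := hφ.le_apply (x := j); omega⟩
    have hdsub : Tendsto (fun j => dist (T^[2*φ j - 1] x) (T^[2*φ j - 1 + 1] x)) atTop
        (nhds D) := (hconsec x hx).comp hidx
    have hlim : Tendsto (fun j => dist z (T^[2*φ j] x) +
        (k * (dist (T^[2*φ j - 1] x) (T^[2*φ j - 1 + 1] x) + dist (T^[2*φ j] x) z)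
          + (1-k)*D)) atTop (nhds D) := by
      have : Tendsto (fun j => dist z (T^[2*φ j] x)) atTop (nhds 0) := by
        simpa [dist_comm] using heps
      have h := (this.add (((hdsub.add heps).const_mul k).add_const ((1-k)*D)))
      have : (0:ℝ) + (k * (D + 0) + (1-k)*D) = D := by ring
      rwa [this] at h
    refine ge_of_tendsto hlim ?_
    filter_upwards [eventually_ge_atTop 1] with j hj
    have hφ1 : 1 ≤ φ j := le_trans hj (hφ.le_apply)
    have hsucc : 2*φ j - 1 + 1 = 2*φ j := by omega
    have hwB : T^[2*φ j - 1] x ∈ B := by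
      obtain ⟨m, hm⟩ : ∃ m, 2*φ j - 1 = 2*m+1 := ⟨φ j - 1, by omega⟩
      rw [hm]; exact (hmem x hx m).2
    have hc : dist (T z) (T (T^[2*φ j - 1] x)) ≤ k * dist z (T^[2*φ j - 1] x) + (1-k)*D :=
      hcontr z hz _ hwB
    have hiter : T (T^[2*φ j - 1] x) = T^[2*φ j] x := by
      have e : T^[2*φ j - 1 + 1] x = T (T^[2*φ j - 1] x) := Function.iterate_succ_apply' T _ x
      rw [hsucc] at e; exact e.symm
    rw [hiter] at hc
    have htri : dist z (T z) ≤ dist z (T^[2*φ j] x) + dist (T^[2*φ j] x) (T z) :=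
      dist_triangle _ _ _
    have htri2 : dist z (T^[2*φ j - 1] x) ≤
        dist z (T^[2*φ j] x) + dist (T^[2*φ j] x) (T^[2*φ j - 1] x) := dist_triangle _ _ _
    have hre : dist (T^[2*φ j] x) (T^[2*φ j - 1] x)
        = dist (T^[2*φ j - 1] x) (T^[2*φ j - 1 + 1] x) := by rw [dist_comm, hsucc]
    rw [dist_comm (T^[2*φ j] x) z]
    rw [dist_comm (T^[2*φ j] x) (T z)] at htri
    nlinarith [hc, htri, htri2, hre, dist_nonneg (x := z) (y := T^[2*φ j] x)]
  -- infDist at image of best proximity point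
  have hinf : ∀ z ∈ A, dist z (T z) = D → Metric.infDist (T z) A = D := by
    intro z hz hzD
    refine le_antisymm (by rw [← hzD, dist_comm]; exact infDist_le_dist_of_mem hz) ?_
    by_contra h
    push_neg at h
    obtain ⟨y, hy, hylt⟩ := (infDist_lt_iff hA).1 h
    exact absurd (hDle y hy _ (hTA hz)) (by rw [dist_comm]; linarith)
  -- T² fixes best proximity points
  have hT2 : ∀ z ∈ A, dist z (T z) = D → T (T z) = z := by
    intro z hz hzD
    have hinfz := hinf z hz hzD
    obtain ⟨y, _, hyu⟩ := hcheb (T z) (hTA hz) hinfz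
    have h1 : T (T z) ∈ A := hTB (hTA hz)
    have h2 : dist (T z) (T (T z)) = D := by
      refine le_antisymm ?_ (hDle _ h1 _ (hTA hz) |>.trans_eq (dist_comm _ _))
      have := hcontr z hz (T z) (hTA hz)
      rw [hzD] at this; linarith
    have e1 : T (T z) = y := hyu _ ⟨h1, by rw [h2, hinfz]⟩
    have e2 : z = y := hyu _ ⟨hz, by rw [dist_comm, hzD, hinfz]⟩
    rw [e1, e2]
  -- uniqueness of best proximity points in A
  have huniq : ∀ z ∈ A, ∀ z' ∈ A, dist z (T z) = D → dist z' (T z') = D → z = z' := by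
    intro z hz z' hz' hzD hz'D
    have h2z := hT2 z hz hzD
    have h2z' := hT2 z' hz' hz'D
    set u := dist z (T z') with hu
    set v := dist z' (T z) with hv
    have hu1 : u ≤ k * v + (1-k)*D := by
      have hc := hcontr z' hz' (T z) (hTA hz)
      rw [h2z] at hc
      rw [hu, dist_comm]
      exact hc
    have hv1 : v ≤ k * u + (1-k)*D := by
      have hc := hcontr z hz (T z') (hTA hz')
      rw [h2z'] at hc
      rw [hv, dist_comm]
      exact hc
    have hDu : D ≤ u := hDle z hz _ (hTA hz')
    have hDv : D ≤ v := hDle z' hz' _ (hTA hz)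
    have huD : u = D := by nlinarith
    -- z and z' are both nearest points to T z' in A
    have hinfz' := hinf z' hz' hz'D
    obtain ⟨y, _, hyu⟩ := hcheb (T z') (hTA hz') hinfz'
    have e1 : z = y := hyu _ ⟨hz, by rw [dist_comm, ← hu, huD, hinfz']⟩
    have e2 : z' = y := hyu _ ⟨hz', by rw [dist_comm, hz'D, hinfz']⟩
    rw [e1, e2]
  -- compactness of orbit closure pieces
  have horbit : ∀ x ∈ A, ∃ z ∈ A, ∃ φ : ℕ → ℕ, StrictMono φ ∧
      Tendsto (fun j => T^[2 * φ j] x) atTop (nhds z) := by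
    intro x hx
    set M := max (dist x (T x)) (2*k*dist x (T x)/(1-k) + D) with hM
    have hK : IsCompact (A ∩ Metric.closedBall (T x) M) := by
      refine hcomp _ Set.inter_subset_left
        (hAclosed.inter Metric.isClosed_closedBall) ?_
      exact (Metric.isBounded_closedBall).subset Set.inter_subset_right
    have hin : ∀ n, T^[2*n] x ∈ A ∩ Metric.closedBall (T x) M := by
      intro n
      exact ⟨(hmem x hx n).1, Metric.mem_closedBall.2 (hbdd x hx n)⟩
    obtain ⟨z, hzK, φ, hφ, hconv⟩ := hK.tendsto_subseq hin
    exact ⟨z, hzK.1, φ, hφ, hconv⟩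
  obtain ⟨x₀, hx₀⟩ := hA
  obtain ⟨z, hzA, φ, hφ, hconv⟩ := horbit x₀ hx₀
  have hzD : dist z (T z) = D := hlimbp x₀ hx₀ z φ hφ hconv hzA
  refine ⟨z, hzA, hzD, fun z' hz' hz'D => huniq z' hz' z hzA hz'D hzD, ?_⟩
  intro x hx
  set M := max (dist x (T x)) (2*k*dist x (T x)/(1-k) + D) with hM
  have hK : IsCompact (A ∩ Metric.closedBall (T x) M) := by
    refine hcomp _ Set.inter_subset_left
      (hAclosed.inter Metric.isClosed_closedBall) ?_
    exact (Metric.isBounded_closedBall).subset Set.inter_subset_right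
  have hin : ∀ n, T^[2*n] x ∈ A ∩ Metric.closedBall (T x) M := fun n =>
    ⟨(hmem x hx n).1, Metric.mem_closedBall.2 (hbdd x hx n)⟩
  refine tendsto_of_subseq_tendsto ?_
  intro ns hns
  -- extract a strictly monotone subsequence index
  obtain ⟨ψ, hψ, hψns⟩ : ∃ ψ : ℕ → ℕ, StrictMono ψ ∧ StrictMono (ns ∘ ψ) := by
    have := strictMono_subseq_of_tendsto_atTop hns
    obtain ⟨ψ, hψ1, hψ2⟩ := this
    exact ⟨ψ, hψ1, hψ2⟩
  have hin' : ∀ j, T^[2 * (ns (ψ j))] x ∈ A ∩ Metric.closedBall (T x) M := fun j => hin _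
  obtain ⟨w, hwK, σ, hσ, hwconv⟩ := hK.tendsto_subseq hin'
  have hcomp' : StrictMono (ns ∘ ψ ∘ σ) := hψns.comp hσ
  have hwbp : dist w (T w) = D := by
    refine hlimbp x hx w (ns ∘ ψ ∘ σ) hcomp' ?_ hwK.1
    exact hwconv
  have hwz : w = z := huniq w hwK.1 z hzA hwbp hzD
  exact ⟨ψ ∘ σ, by rw [← hwz]; exact hwconv⟩
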